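/- If the score of every Delaunay star in a saturated packing of unit balls is at most s, where s < 16π/3, then the density of the packing is at most 16π·δ_oct/(16π − 3s). In particular, if every Delaunay star scores at most 8 pt, the density is at most π/√18. -/

import Mathlib

noncomputable section
open MeasureTheory Real

local notation "E" => EuclideanSpace ℝ (Fin 3)

/-- δ_oct, the density of a regular octahedron with edge 2. -/
def deltaOct : ℝ := (-3*π + 12*Real.arccos (1/Real.sqrt 3)) / Real.sqrt 8

/-- One point: the compression of the regular simplex with edge 2. -/
def pt : ℝ := 11*π/3 - 12*Real.arccos (1/Real.sqrt 3)

/-- The (upper) density of a packing with centers Λ: the limsup as N → ∞ of the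
ratio of the volume of the unit balls centered in the ball of radius N to the
volume of that ball. -/
def packingDensity (Λ : Set E) : ℝ :=
  Filter.limsup (fun N : ℝ =>
    ((Nat.card ↥(Λ ∩ Metric.closedBall (0:E) N)) * (4*π/3)) /
      (volume (Metric.closedBall (0:E) N)).toReal) Filter.atTop

/-- `-3π + 12 arccos(1/√3) > 0`, since `arccos(1/√3) > arccos(√2/2) = π/4`. -/
lemma neg_three_pi_add_twelve_arccos_pos :
    0 < -3*π + 12*Real.arccos (1/Real.sqrt 3) := by
  have h2 : Real.sqrt 2 ^ 2 = 2 := Real.sq_sqrt (by norm_num)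
  have h3 : Real.sqrt 3 ^ 2 = 3 := Real.sq_sqrt (by norm_num)
  have h2p : 0 < Real.sqrt 2 := Real.sqrt_pos.2 (by norm_num)
  have h3p : 0 < Real.sqrt 3 := Real.sqrt_pos.2 (by norm_num)
  have hlt : (1:ℝ)/Real.sqrt 3 < Real.sqrt 2/2 := by
    rw [div_lt_div_iff₀ h3p (by norm_num)]
    nlinarith [mul_pos h2p h3p]
  have hmem1 : Real.sqrt 2/2 ∈ Set.Icc (-1:ℝ) 1 := by
    constructor <;> nlinarith
  have hmem2 : (1:ℝ)/Real.sqrt 3 ∈ Set.Icc (-1:ℝ) 1 := by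
    have : (0:ℝ) ≤ 1/Real.sqrt 3 := by positivity
    constructor
    · linarith
    · rw [div_le_one h3p]; nlinarith
  have := Real.strictAntiOn_arccos hmem2 hmem1 hlt
  rw [← Real.cos_pi_div_four, Real.arccos_cos (by positivity)
    (by linarith [Real.pi_pos])] at this
  linarith

/-- The value of the density bound when `s = 8 pt`. -/
lemma deltaOct_bound_value :
    16*π*deltaOct/(16*π - 3*(8*pt)) = π / Real.sqrt 18 := by
  have ht := neg_three_pi_add_twelve_arccos_pos
  have hu : Real.sqrt 8 ≠ 0 := by positivity
  have hv : Real.sqrt 18 ≠ 0 := by positivity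
  have hprod : Real.sqrt 8 * Real.sqrt 18 = 12 := by
    rw [← Real.sqrt_mul (by norm_num)]
    rw [show (8:ℝ)*18 = 12^2 by norm_num, Real.sqrt_sq (by norm_num)]
  have h8 : Real.sqrt 8 * Real.sqrt 8 = 8 := Real.mul_self_sqrt (by norm_num)
  unfold deltaOct pt
  set a := Real.arccos (1/Real.sqrt 3) with ha
  have ht' : -3*π + 12*a ≠ 0 := ne_of_gt ht
  rw [show 16*π - 3*(8*(11*π/3 - 12*a)) = 24 * (-3*π + 12*a) by ring]
  rw [div_eq_div_iff (by positivity) (by positivity)]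
  field_simp
  linear_combination (2*Real.sqrt 8*(-3*π+12*a)) * hprod
    - (2*Real.sqrt 18*(-3*π+12*a)) * h8

/-- Lemma 2.1 of Hales, Sphere Packings I.  Λ is the set of centers of a
saturated packing of unit balls and σ assigns to each center the score of its
Delaunay star.  The hypothesis `hasymp` is the asymptotic identity
Σ_{Λ_N} σ(D*(v)) = 4(−δ_oct vol(B_N) + |Λ_N|·4π/3) + O(N²), which encodes that
the score is asymptotic to the compression and that Delaunay stars give a
four-fold cover of space.  If every Delaunay star scores at most s < 16π/3,
then the density is at most 16π·δ_oct/(16π − 3s); in particular a bound of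
8 pt gives density at most π/√18. -/
theorem score_bound_implies_density_bound
    (Λ : Set E) (σ : E → ℝ) (s : ℝ)
    (hpack : ∀ x ∈ Λ, ∀ y ∈ Λ, x ≠ y → 2 ≤ dist x y)
    (hsat : ∀ p : E, ∃ v ∈ Λ, dist p v ≤ 2)
    (hscore : ∀ v ∈ Λ, σ v ≤ s)
    (hs : s < 16*π/3)
    (hasymp : ∃ C : ℝ, 0 < C ∧ ∀ N : ℝ, 1 ≤ N →
      |(∑ᶠ v ∈ Λ ∩ Metric.closedBall (0:E) N, σ v) -
        4*(-(deltaOct) * (volume (Metric.closedBall (0:E) N)).toReal +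
          (Nat.card ↥(Λ ∩ Metric.closedBall (0:E) N)) * (4*π/3))| ≤ C * N^2) :
    packingDensity Λ ≤ 16*π*deltaOct/(16*π - 3*s) ∧
    (s = 8 * pt → packingDensity Λ ≤ π / Real.sqrt 18) := by
  have hπ := Real.pi_pos
  have hq : 0 < 16*π - 3*s := by linarith
  have main : packingDensity Λ ≤ 16*π*deltaOct/(16*π - 3*s) := by
    obtain ⟨C, hC, hB⟩ := hasymp
    -- finiteness of Λ ∩ closed balls
    have hfin : ∀ N : ℝ, (Λ ∩ Metric.closedBall (0:E) N).Finite := by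
      intro N
      obtain ⟨t, ht⟩ := (isCompact_closedBall (0:E) N).elim_finite_subcover
        (fun x : E => Metric.ball x 1) (fun x => Metric.isOpen_ball)
        (fun x _ => Set.mem_iUnion.2 ⟨x, Metric.mem_ball_self one_pos⟩)
      have hsub : Λ ∩ Metric.closedBall (0:E) N ⊆ ⋃ x ∈ t, Λ ∩ Metric.ball x 1 := by
        intro v hv
        obtain ⟨i, hi, hvi⟩ := Set.mem_iUnion₂.1 (ht hv.2)
        exact Set.mem_iUnion₂.2 ⟨i, hi, hv.1, hvi⟩
      refine Set.Finite.subset (Set.Finite.biUnion t.finite_toSet fun x _ => ?_) hsub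
      refine Set.Subsingleton.finite fun v hv w hw => ?_
      by_contra hne
      have hd := hpack v hv.1 w hw.1 hne
      have d1 : dist v x < 1 := hv.2
      have d2 : dist w x < 1 := hw.2
      have := dist_triangle v x w
      rw [dist_comm w x] at d2
      linarith
    set c := (volume (Metric.closedBall (0:E) 1)).toReal with hcdef
    have hc : 0 < c :=
      ENNReal.toReal_pos (Metric.measure_closedBall_pos volume 0 one_pos).ne'
        measure_closedBall_lt_top.ne
    have hVol : ∀ N : ℝ, 0 ≤ N →
        (volume (Metric.closedBall (0:E) N)).toReal = N^3 * c := by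
      intro N hN
      rw [hcdef, Measure.addHaar_closedBall' volume (0:E) hN, ENNReal.toReal_mul,
        ENNReal.toReal_ofReal (by positivity), finrank_euclideanSpace_fin]
    set L := 16*π*deltaOct/(16*π - 3*s) with hL
    set K := 4*π*C/((16*π - 3*s)*c) with hK
    have hKpos : 0 < K := div_pos (by positivity) (mul_pos hq hc)
    have key : ∀ N : ℝ, 1 ≤ N →
        ((Nat.card ↥(Λ ∩ Metric.closedBall (0:E) N)) * (4*π/3)) /
          (volume (Metric.closedBall (0:E) N)).toReal ≤ L + K/N := by
      intro N hN
      have hN0 : 0 < N := lt_of_lt_of_le one_pos hN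
      set A := ((Nat.card ↥(Λ ∩ Metric.closedBall (0:E) N)) : ℝ) with hA
      have hAnn : 0 ≤ A := Nat.cast_nonneg _
      have hScard : (∑ᶠ v ∈ Λ ∩ Metric.closedBall (0:E) N, σ v) ≤ s * A := by
        rw [finsum_mem_eq_finite_toFinset_sum σ (hfin N), hA,
          Nat.card_eq_card_finite_toFinset (hfin N)]
        calc ∑ v ∈ (hfin N).toFinset, σ v ≤ ∑ v ∈ (hfin N).toFinset, s :=
              Finset.sum_le_sum fun v hv =>
                hscore v (((hfin N).mem_toFinset.1 hv).1)
          _ = ((hfin N).toFinset.card : ℝ) * s := by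
              rw [Finset.sum_const, nsmul_eq_mul]
          _ = s * ((hfin N).toFinset.card : ℝ) := mul_comm _ _
      have habs := (abs_le.1 (hB N hN)).1
      rw [hVol N hN0.le] at habs ⊢
      have hAq : A * (16*π - 3*s) ≤ 12*deltaOct*(N^3*c) + 3*C*N^2 := by
        nlinarith [habs, hScard]
      have hVpos : 0 < N^3*c := by positivity
      rw [div_le_iff₀ hVpos]
      have e2 : L*(N^3*c) + K*(N^2*c)
          = (12*deltaOct*(N^3*c) + 3*C*N^2) * (4*π/3) / (16*π - 3*s) := by
        rw [hL, hK]
        field_simp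
        ring
      have step : A * (4*π/3) ≤ L*(N^3*c) + K*(N^2*c) := by
        rw [e2, le_div_iff₀ hq]
        nlinarith [mul_le_mul_of_nonneg_right hAq
          (by positivity : (0:ℝ) ≤ 4*π/3)]
      have e3 : (L + K/N)*(N^3*c) = L*(N^3*c) + K*(N^2*c) := by
        field_simp
      rw [e3]
      exact step
    rw [packingDensity]
    refine le_of_forall_pos_le_add fun ε hε => ?_
    refine Filter.limsup_le_of_le
      (Filter.isCoboundedUnder_le_of_le Filter.atTop (x := 0)
        fun N => by positivity) ?_
    filter_upwards [Filter.eventually_ge_atTop (max 1 (K/ε))] with N hN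
    have hN1 : 1 ≤ N := le_trans (le_max_left _ _) hN
    have hN0 : 0 < N := lt_of_lt_of_le one_pos hN1
    have h2 : K/N ≤ ε := by
      have hKe : K/ε ≤ N := le_trans (le_max_right _ _) hN
      rw [div_le_iff₀ hN0]
      calc K = ε * (K/ε) := by field_simp
        _ ≤ ε * N := by nlinarith
    exact le_trans (key N hN1) (by linarith)
  refine ⟨main, fun hsval => ?_⟩
  rw [hsval] at main
  exact main.trans_eq deltaOct_bound_value
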